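/- Let n ≥ 3 and 3 ≤ k ≤ n. Consider n random lengths X_1, …, X_n drawn independently and uniformly from [0,1] (equivalently, Lebesgue measure on the cube [0,1]^n), and let X_(1) ≤ X_(2) ≤ ⋯ ≤ X_(n) denote their increasing rearrangement. Then the probability of the event that X_(i) + X_(i+1) + ⋯ + X_(i+k−2) < X_(i+k−1) for every index 1 ≤ i ≤ n−k+1 (i.e., that no k-gon can be formed from any k of the sticks) equals 1 / ( (∏_{ℓ=1}^{k−1} T_{k,ℓ}(n)) · (∏_{i=1}^{n−k+1} T_{k,k−1}(n−i)) ). -/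

import Mathlib

open MeasureTheory Finset ENNReal

/-- `T k ℓ` : the `(k-1)`-bonacci sequence with initial terms
`T k ℓ 1 = ⋯ = T k ℓ (ℓ-1) = 0`, `T k ℓ ℓ = ⋯ = T k ℓ (k-1) = 1` and
recurrence `T k ℓ m = ∑_{p=1}^{k-1} T k ℓ (m-p)` for `m ≥ k`. -/
def T (k ℓ : ℕ) : ℕ → ℕ
  | m =>
    if m < k then (if ℓ ≤ m then 1 else 0)
    else if h0 : m = 0 then 0
    else ∑ p ∈ (Finset.range (k - 1)).attach, T k ℓ (m - (↑p + 1))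
  termination_by m => m
  decreasing_by omega

/-- `S k` : the `(k-1)`-bonacci sequence with `S k 1 = 1`, `S k i = 2^(i-2)` for
`2 ≤ i ≤ k-1`, and recurrence `S k m = ∑_{p=1}^{k-1} S k (m-p)` for `m ≥ k`. -/
def S (k : ℕ) : ℕ → ℕ
  | m =>
    if h0 : m = 0 then 0
    else if m = 1 then 1
    else if m < k then 2 ^ (m - 2)
    else ∑ p ∈ (Finset.range (k - 1)).attach, S k (m - (↑p + 1))
  termination_by m => m
  decreasing_by omega

/-- No `k`-gon can be formed from the (increasingly sorted) stick lengths `y`: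
for every window of `k` consecutive entries, i.e. every (0-indexed) `i` with
`i + (k-1) < n`, one has `y i + ⋯ + y (i+k-2) < y (i+k-1)`. -/
def NoPolygon (n k : ℕ) (y : Fin n → ℝ) : Prop :=
  ∀ i : ℕ, ∀ hi : i + (k - 1) < n,
    (∑ j : Fin (k - 1), y ⟨i + j, by have := j.isLt; omega⟩) < y ⟨i + (k - 1), hi⟩

namespace PickupSticks

/-! ### Combinatorics of the sequences `T` -/

lemma T_lt {k ℓ m : ℕ} (h : m < k) : T k ℓ m = if ℓ ≤ m then 1 else 0 := by
  rw [T, if_pos h]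

lemma T_ge {k ℓ m : ℕ} (hk : 1 ≤ k) (h : k ≤ m) :
    T k ℓ m = ∑ p ∈ Finset.range (k - 1), T k ℓ (m - (p + 1)) := by
  rw [T, if_neg (by omega), dif_neg (by omega)]
  exact Finset.sum_attach _ fun p => T k ℓ (m - (p + 1))

lemma sum_shift {m : ℕ} {M : Type*} [AddCommMonoid M] (f : ℕ → M) :
    ∑ p ∈ Finset.Icc 1 m, f p = ∑ p ∈ Finset.range m, f (p + 1) := by
  rw [← Finset.Ico_add_one_right_eq_Icc, Finset.sum_Ico_eq_sum_range]
  apply Finset.sum_congr rfl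
  intro i _
  rw [add_comm]

lemma prod_shift {m : ℕ} {M : Type*} [CommMonoid M] (f : ℕ → M) :
    ∏ p ∈ Finset.Icc 1 m, f p = ∏ p ∈ Finset.range m, f (p + 1) := by
  rw [← Finset.Ico_add_one_right_eq_Icc, Finset.prod_Ico_eq_prod_range]
  apply Finset.prod_congr rfl
  intro i _
  rw [add_comm]

lemma T_pos {k ℓ m : ℕ} (hk : 2 ≤ k) (hℓ1 : 1 ≤ ℓ) (hℓ : ℓ ≤ k - 1) (h : ℓ ≤ m) :
    0 < T k ℓ m := by
  induction m using Nat.strong_induction_on with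
  | _ m IH =>
    rcases lt_or_ge m k with hm | hm
    · rw [T_lt hm, if_pos h]; norm_num
    · rw [T_ge (by omega) hm]
      have h0 : (0 : ℕ) ∈ Finset.range (k - 1) := Finset.mem_range.mpr (by omega)
      have h2 := Finset.single_le_sum (f := fun p => T k ℓ (m - (p + 1)))
        (fun i _ => Nat.zero_le _) h0
      have h1 : 0 < T k ℓ (m - (0 + 1)) := IH _ (by omega) (by omega)
      exact lt_of_lt_of_le h1 h2

/-- window depth at position `j` (0-indexed). -/
def d (k j : ℕ) : ℕ := if j < k - 1 then min j 1 else k - 1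

lemma d_le (k j : ℕ) : d k j ≤ j := by unfold d; split <;> omega

lemma d_zero (k : ℕ) : d k 0 = 0 := by unfold d; split <;> omega

/-- coefficient of `z_j` in the expansion of `y_m` (0-indexed `m`, `j`). -/
def cf (k m j : ℕ) : ℕ :=
  if j < k - 1 then T k (j + 1) (m + 1) else T k (k - 1) ((m + 1) - (j - (k - 2)))

lemma cf_rec {k : ℕ} (hk : 2 ≤ k) (m j : ℕ) :
    cf k m j = (if j = m then 1 else 0) + ∑ p ∈ Finset.Icc 1 (d k m), cf k (m - p) j := by
  rcases Nat.lt_or_ge m (k - 1) with hm | hm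
  · rcases Nat.eq_zero_or_pos m with rfl | hm1
    · rw [d_zero]
      rw [show Finset.Icc 1 0 = (∅ : Finset ℕ) by simp, Finset.sum_empty, add_zero]
      unfold cf
      split
      · next hj =>
        rw [T_lt (by omega)]
        split <;> split <;> omega
      · next hj =>
        rw [show (0 + 1) - (j - (k-2)) = 0 by omega, T_lt (by omega),
          if_neg (by omega), if_neg (by omega)]
    · have hd : d k m = 1 := by unfold d; rw [if_pos hm]; omega
      rw [hd]
      simp only [Finset.Icc_self, Finset.sum_singleton]
      unfold cf
      split
      · next hj =>
        rw [T_lt (by omega), T_lt (by omega)]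
        split <;> split <;> split <;> omega
      · next hj =>
        rw [T_lt (by omega), T_lt (by omega)]
        rw [if_neg (by omega), if_neg (by omega), if_neg (by omega)]
  · have hd : d k m = k - 1 := by unfold d; rw [if_neg (by omega)]
    rw [hd]
    unfold cf
    split
    · next hj =>
      rw [if_neg (by omega), zero_add, T_ge (by omega) (by omega),
        sum_shift (fun p => T k (j+1) ((m - p) + 1))]
      apply Finset.sum_congr rfl
      intro p hp
      simp only [Finset.mem_range] at hp
      congr 1
      omega
    · next hj =>
      rw [sum_shift (fun p => T k (k-1) ((m - p + 1) - (j - (k - 2))))]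
      rcases Nat.lt_trichotomy ((m+1) - (j - (k-2))) (k-1) with hc | hc | hc
      · rw [T_lt (by omega), if_neg (by omega), if_neg (by omega), zero_add]
        symm
        apply Finset.sum_eq_zero
        intro p hp
        simp only [Finset.mem_range] at hp
        rw [T_lt (by omega), if_neg (by omega)]
      · rw [T_lt (by omega), if_pos (by omega), if_pos (by omega)]
        rw [Finset.sum_eq_zero, add_zero]
        intro p hp
        simp only [Finset.mem_range] at hp
        rw [T_lt (by omega), if_neg (by omega)]
      · rw [T_ge (by omega) (by omega), if_neg (by omega), zero_add]
        apply Finset.sum_congr rfl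
        intro p hp
        simp only [Finset.mem_range] at hp
        congr 1
        omega

lemma cf_pos {n k j : ℕ} (hk : 2 ≤ k) (hkn : k ≤ n) (hj : j < n) :
    0 < cf k (n - 1) j := by
  unfold cf
  rw [show (n - 1) + 1 = n by omega]
  split
  · exact T_pos hk (by omega) (by omega) (by omega)
  · exact T_pos hk (by omega) (by omega) (by omega)

/-! ### The triangular change of variables -/

variable (n k : ℕ)

def phi : (Fin n → ℝ) →ₗ[ℝ] (Fin n → ℝ) where
  toFun y := fun i => y i - ∑ p ∈ Finset.Icc 1 (d k i.val),
    y ⟨i.val - p, Nat.lt_of_le_of_lt (Nat.sub_le _ _) i.isLt⟩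
  map_add' y z := by
    funext i
    simp only [Pi.add_apply, Finset.sum_add_distrib]
    ring
  map_smul' c y := by
    funext i
    simp only [Pi.smul_apply, RingHom.id_apply, smul_eq_mul, ← Finset.mul_sum]
    ring

lemma phi_apply (y : Fin n → ℝ) (i : Fin n) :
    phi n k y i = y i - ∑ p ∈ Finset.Icc 1 (d k i.val),
      y ⟨i.val - p, Nat.lt_of_le_of_lt (Nat.sub_le _ _) i.isLt⟩ := rfl

lemma det_phi : LinearMap.det (phi n k) = 1 := by
  rw [← LinearMap.det_toMatrix']
  rw [Matrix.det_of_lowerTriangular]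
  · rw [Finset.prod_eq_one]
    intro i _
    rw [LinearMap.toMatrix'_apply, phi_apply]
    simp only [Pi.single_apply]
    rw [if_pos trivial, Finset.sum_eq_zero, sub_zero]
    intro p hp
    simp only [Finset.mem_Icc] at hp
    have := d_le k i.val
    rw [if_neg]
    intro h
    have := congrArg Fin.val h
    simp only at this
    omega
  · intro i j hij
    have hij' : (i : ℕ) < (j : ℕ) := hij
    rw [LinearMap.toMatrix'_apply, phi_apply]
    simp only [Pi.single_apply]
    rw [if_neg (by intro h; have := congrArg Fin.val h; omega),
      Finset.sum_eq_zero, sub_zero]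
    intro p hp
    rw [if_neg]
    intro h
    have := congrArg Fin.val h
    simp only at this
    omega

lemma expand (hk : 2 ≤ k) (y : Fin n → ℝ) :
    ∀ M : ℕ, ∀ hM : M < n,
      y ⟨M, hM⟩ = ∑ j : Fin n, (cf k M j.val : ℝ) * phi n k y j := by
  intro M
  induction M using Nat.strong_induction_on with
  | _ M IH =>
    intro hM
    have h1 : y ⟨M, hM⟩ = phi n k y ⟨M, hM⟩ +
        ∑ p ∈ Finset.Icc 1 (d k M), y ⟨M - p, Nat.lt_of_le_of_lt (Nat.sub_le _ _) hM⟩ := by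
      rw [phi_apply]; ring
    have h2 : ∀ p ∈ Finset.Icc 1 (d k M),
        y ⟨M - p, Nat.lt_of_le_of_lt (Nat.sub_le _ _) hM⟩ =
          ∑ j : Fin n, (cf k (M - p) j.val : ℝ) * phi n k y j := by
      intro p hp
      simp only [Finset.mem_Icc] at hp
      have hd := d_le k M
      exact IH (M - p) (by omega) _
    rw [h1, Finset.sum_congr rfl h2]
    have h3 : ∀ j : Fin n, (cf k M j.val : ℝ) =
        (if (j : ℕ) = M then (1:ℝ) else 0) +
          ∑ p ∈ Finset.Icc 1 (d k M), (cf k (M - p) j.val : ℝ) := by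
      intro j
      rw [cf_rec hk M j.val]
      push_cast [apply_ite (Nat.cast : ℕ → ℝ)]
      ring
    have h4 : ∑ j : Fin n, (cf k M j.val : ℝ) * phi n k y j =
        (∑ j : Fin n, (if (j : ℕ) = M then (1:ℝ) else 0) * phi n k y j) +
          ∑ j : Fin n, ∑ p ∈ Finset.Icc 1 (d k M), (cf k (M - p) j.val : ℝ) * phi n k y j := by
      rw [← Finset.sum_add_distrib]
      apply Finset.sum_congr rfl
      intro j _
      rw [h3 j]
      rw [add_mul, Finset.sum_mul]
    rw [h4]
    congr 1
    · calc phi n k y ⟨M, hM⟩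
          = ∑ j : Fin n, (if j = (⟨M, hM⟩ : Fin n) then phi n k y j else 0) := by
            rw [Finset.sum_ite_eq' Finset.univ]
            simp
        _ = ∑ j : Fin n, (if (j : ℕ) = M then (1:ℝ) else 0) * phi n k y j := by
            apply Finset.sum_congr rfl
            intro j _
            by_cases h : j = (⟨M, hM⟩ : Fin n)
            · subst h; simp
            · rw [if_neg h, if_neg (by simpa [Fin.ext_iff] using h), zero_mul]
    · rw [Finset.sum_comm]

def psi : (Fin n → ℝ) →ₗ[ℝ] (Fin n → ℝ) :=
  Matrix.toLin' (Matrix.diagonal fun j : Fin n => (cf k (n - 1) j.val : ℝ))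

lemma psi_apply (y : Fin n → ℝ) (i : Fin n) :
    psi n k y i = (cf k (n - 1) i.val : ℝ) * y i := by
  simp [psi, Matrix.toLin'_apply, Matrix.mulVec_diagonal]

lemma det_psi : LinearMap.det (psi n k) = ∏ i : Fin n, (cf k (n - 1) i.val : ℝ) := by
  rw [psi, LinearMap.det_toLin']
  exact Matrix.det_diagonal

/-! ### The simplex and its basic measure properties -/

def simplexSet : Set (Fin n → ℝ) := {w | (∀ j, 0 ≤ w j) ∧ ∑ j, w j ≤ 1}

def simplexSetS : Set (Fin n → ℝ) := {w | (∀ j, 0 < w j) ∧ ∑ j, w j ≤ 1}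

lemma meas_simplexSet : MeasurableSet (simplexSet n) := by
  have h : simplexSet n =
      (⋂ j : Fin n, {w : Fin n → ℝ | 0 ≤ w j}) ∩ {w : Fin n → ℝ | ∑ j, w j ≤ 1} := by
    ext w
    simp [simplexSet, Set.mem_iInter]
  rw [h]
  exact (MeasurableSet.iInter fun j : Fin n =>
      measurableSet_le measurable_const (measurable_pi_apply j)).inter
    (measurableSet_le (Finset.measurable_sum _ fun j _ => measurable_pi_apply j)
      measurable_const)

lemma meas_simplexSetS : MeasurableSet (simplexSetS n) := by
  have h : simplexSetS n =
      (⋂ j : Fin n, {w : Fin n → ℝ | 0 < w j}) ∩ {w : Fin n → ℝ | ∑ j, w j ≤ 1} := by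
    ext w
    simp [simplexSetS, Set.mem_iInter]
  rw [h]
  exact (MeasurableSet.iInter fun j : Fin n =>
      measurableSet_lt measurable_const (measurable_pi_apply j)).inter
    (measurableSet_le (Finset.measurable_sum _ fun j _ => measurable_pi_apply j)
      measurable_const)

lemma null_coord (j : Fin n) : volume {w : Fin n → ℝ | w j = 0} = 0 := by
  have h1 : {w : Fin n → ℝ | w j = 0} =
      (LinearMap.ker (LinearMap.proj j : (Fin n → ℝ) →ₗ[ℝ] ℝ) : Set (Fin n → ℝ)) := by
    ext w
    simp [LinearMap.mem_ker]
  rw [h1]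
  apply Measure.addHaar_submodule
  intro htop
  have : (Pi.single j 1 : Fin n → ℝ) ∈ LinearMap.ker (LinearMap.proj j : (Fin n → ℝ) →ₗ[ℝ] ℝ) := by
    rw [htop]; trivial
  simp [LinearMap.mem_ker] at this

lemma vol_simplexSetS : volume (simplexSetS n) = volume (simplexSet n) := by
  apply le_antisymm
  · exact measure_mono fun w hw => ⟨fun j => (hw.1 j).le, hw.2⟩
  · have hsub : simplexSet n ⊆ simplexSetS n ∪ ⋃ j : Fin n, {w : Fin n → ℝ | w j = 0} := by
      intro w hw
      by_cases h : ∀ j, 0 < w j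
      · exact Or.inl ⟨h, hw.2⟩
      · push_neg at h
        obtain ⟨j, hj⟩ := h
        exact Or.inr (Set.mem_iUnion.mpr ⟨j, le_antisymm hj (hw.1 j)⟩)
    calc volume (simplexSet n)
        ≤ volume (simplexSetS n ∪ ⋃ j : Fin n, {w : Fin n → ℝ | w j = 0}) :=
          measure_mono hsub
      _ ≤ volume (simplexSetS n) + volume (⋃ j : Fin n, {w : Fin n → ℝ | w j = 0}) :=
          measure_union_le _ _
      _ ≤ volume (simplexSetS n) + ∑' j : Fin n, volume {w : Fin n → ℝ | w j = 0} := by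
          gcongr
          exact measure_iUnion_le _
      _ = volume (simplexSetS n) := by
          simp [null_coord]

/-! ### Sector decomposition via sorting -/

lemma perm_set_eq (σ : Equiv.Perm (Fin n)) (C : Set (Fin n → ℝ)) :
    {x : Fin n → ℝ | x ∘ σ ∈ C} =
      (MeasurableEquiv.piCongrLeft (fun _ : Fin n => ℝ) σ.symm) ⁻¹' C := by
  ext x
  simp only [Set.mem_setOf_eq, Set.mem_preimage]
  have hfun : (MeasurableEquiv.piCongrLeft (fun _ : Fin n => ℝ) σ.symm) x = x ∘ σ := by
    funext j
    have := MeasurableEquiv.piCongrLeft_apply_apply σ.symm (β := fun _ : Fin n => ℝ) x (σ j)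
    simpa using this
  rw [hfun]

lemma perm_preimage (σ : Equiv.Perm (Fin n)) {C : Set (Fin n → ℝ)} (hC : MeasurableSet C) :
    volume {x : Fin n → ℝ | x ∘ σ ∈ C} = volume C := by
  rw [perm_set_eq]
  exact (MeasureTheory.volume_measurePreserving_piCongrLeft (fun _ : Fin n => ℝ)
    σ.symm).measure_preimage hC.nullMeasurableSet

lemma sector_le {C : Set (Fin n → ℝ)} (hC : MeasurableSet C) {A : Set (Fin n → ℝ)}
    (hA : ∀ x ∈ A, x ∘ Tuple.sort x ∈ C) :
    volume A ≤ (n.factorial : ℝ≥0∞) * volume C := by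
  have hsub : A ⊆ ⋃ σ : Equiv.Perm (Fin n), {x : Fin n → ℝ | x ∘ σ ∈ C} :=
    fun x hx => Set.mem_iUnion.mpr ⟨Tuple.sort x, hA x hx⟩
  calc volume A ≤ volume (⋃ σ : Equiv.Perm (Fin n), {x : Fin n → ℝ | x ∘ σ ∈ C}) :=
        measure_mono hsub
    _ ≤ ∑' σ : Equiv.Perm (Fin n), volume {x : Fin n → ℝ | x ∘ σ ∈ C} := measure_iUnion_le _
    _ = ∑' _σ : Equiv.Perm (Fin n), volume C := tsum_congr fun σ => perm_preimage n σ hC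
    _ = (n.factorial : ℝ≥0∞) * volume C := by
        rw [tsum_fintype, Finset.sum_const, Finset.card_univ, Fintype.card_perm,
          Fintype.card_fin, nsmul_eq_mul]

lemma sector_ge {C : Set (Fin n → ℝ)} (hC : MeasurableSet C)
    (hmono : ∀ y ∈ C, StrictMono y) {A : Set (Fin n → ℝ)}
    (hA : ∀ x : Fin n → ℝ, x ∘ Tuple.sort x ∈ C → x ∈ A) :
    (n.factorial : ℝ≥0∞) * volume C ≤ volume A := by
  have hsort : ∀ (x : Fin n → ℝ) (σ : Equiv.Perm (Fin n)),
      x ∘ σ ∈ C → x ∘ Tuple.sort x ∈ C := by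
    intro x σ hx
    have he : x ∘ σ = x ∘ Tuple.sort x :=
      Tuple.comp_sort_eq_comp_iff_monotone.mpr (hmono _ hx).monotone
    rwa [he] at hx
  have hsub : (⋃ σ : Equiv.Perm (Fin n), {x : Fin n → ℝ | x ∘ σ ∈ C}) ⊆ A := by
    intro x hx
    obtain ⟨σ, hσ⟩ := Set.mem_iUnion.mp hx
    exact hA x (hsort x σ hσ)
  have hdisj : Pairwise (Function.onFun Disjoint
      fun σ : Equiv.Perm (Fin n) => {x : Fin n → ℝ | x ∘ σ ∈ C}) := by
    intro σ τ hne
    simp only [Function.onFun, Set.disjoint_left]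
    intro x hxσ hxτ
    have h1 : x ∘ σ = x ∘ Tuple.sort x :=
      Tuple.comp_sort_eq_comp_iff_monotone.mpr (hmono _ hxσ).monotone
    have h2 : x ∘ τ = x ∘ Tuple.sort x :=
      Tuple.comp_sort_eq_comp_iff_monotone.mpr (hmono _ hxτ).monotone
    have hinj : Function.Injective x := by
      have hinj1 : Function.Injective (x ∘ σ) := (hmono _ hxσ).injective
      have hx2 : x = (x ∘ σ) ∘ σ.symm := by
        funext i
        simp
      rw [hx2]
      exact hinj1.comp σ.symm.injective
    apply hne
    apply Equiv.ext
    intro i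
    exact hinj (congrFun (h1.trans h2.symm) i)
  have hmeas : ∀ σ : Equiv.Perm (Fin n),
      MeasurableSet {x : Fin n → ℝ | x ∘ σ ∈ C} := by
    intro σ
    rw [perm_set_eq]
    exact (MeasurableEquiv.piCongrLeft (fun _ : Fin n => ℝ) σ.symm).measurable hC
  calc (n.factorial : ℝ≥0∞) * volume C
      = ∑' _σ : Equiv.Perm (Fin n), volume C := by
        rw [tsum_fintype, Finset.sum_const, Finset.card_univ, Fintype.card_perm,
          Fintype.card_fin, nsmul_eq_mul]
    _ = ∑' σ : Equiv.Perm (Fin n), volume {x : Fin n → ℝ | x ∘ σ ∈ C} :=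
        (tsum_congr fun σ => perm_preimage n σ hC).symm
    _ = volume (⋃ σ : Equiv.Perm (Fin n), {x : Fin n → ℝ | x ∘ σ ∈ C}) :=
        (measure_iUnion hdisj hmeas).symm
    _ ≤ volume A := measure_mono hsub

/-! ### The regions -/

def regionHigh : Set (Fin n → ℝ) := phi n k ⁻¹' (psi n k ⁻¹' simplexSet n)

def regionLow : Set (Fin n → ℝ) := phi n k ⁻¹' (psi n k ⁻¹' simplexSetS n)

lemma meas_regionHigh : MeasurableSet (regionHigh n k) :=
  ((meas_simplexSet n).preimage (psi n k).continuous_of_finiteDimensional.measurable).preimage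
    (phi n k).continuous_of_finiteDimensional.measurable

lemma meas_regionLow : MeasurableSet (regionLow n k) :=
  ((meas_simplexSetS n).preimage (psi n k).continuous_of_finiteDimensional.measurable).preimage
    (phi n k).continuous_of_finiteDimensional.measurable

lemma mem_regionHigh (hk : 2 ≤ k) (hkn : k ≤ n) (y : Fin n → ℝ) :
    y ∈ regionHigh n k ↔ (∀ j, 0 ≤ phi n k y j) ∧ y ⟨n - 1, by omega⟩ ≤ 1 := by
  have hexp := expand n k hk y (n-1) (by omega)
  constructor
  · rintro ⟨h1, h2⟩
    refine ⟨fun j => ?_, ?_⟩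
    · have := h1 j
      rw [psi_apply] at this
      have hpos : (0:ℝ) < (cf k (n-1) j.val : ℝ) := by
        exact_mod_cast cf_pos hk hkn j.isLt
      nlinarith
    · rw [hexp]
      calc ∑ j : Fin n, (cf k (n-1) j.val : ℝ) * phi n k y j
          = ∑ j : Fin n, psi n k (phi n k y) j := by
            apply Finset.sum_congr rfl
            intro j _
            rw [psi_apply]
        _ ≤ 1 := h2
  · rintro ⟨h1, h2⟩
    constructor
    · intro j
      rw [psi_apply]
      have hpos : (0:ℝ) < (cf k (n-1) j.val : ℝ) := by
        exact_mod_cast cf_pos hk hkn j.isLt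
      exact mul_nonneg hpos.le (h1 j)
    · calc ∑ j : Fin n, psi n k (phi n k y) j
          = ∑ j : Fin n, (cf k (n-1) j.val : ℝ) * phi n k y j := by
            apply Finset.sum_congr rfl
            intro j _
            rw [psi_apply]
        _ = y ⟨n-1, by omega⟩ := hexp.symm
        _ ≤ 1 := h2

lemma mem_regionLow (hk : 2 ≤ k) (hkn : k ≤ n) (y : Fin n → ℝ) :
    y ∈ regionLow n k ↔ (∀ j, 0 < phi n k y j) ∧ y ⟨n - 1, by omega⟩ ≤ 1 := by
  have hexp := expand n k hk y (n-1) (by omega)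
  constructor
  · rintro ⟨h1, h2⟩
    refine ⟨fun j => ?_, ?_⟩
    · have := h1 j
      rw [psi_apply] at this
      have hpos : (0:ℝ) < (cf k (n-1) j.val : ℝ) := by
        exact_mod_cast cf_pos hk hkn j.isLt
      by_contra hcon
      push_neg at hcon
      nlinarith
    · rw [hexp]
      calc ∑ j : Fin n, (cf k (n-1) j.val : ℝ) * phi n k y j
          = ∑ j : Fin n, psi n k (phi n k y) j := by
            apply Finset.sum_congr rfl
            intro j _
            rw [psi_apply]
        _ ≤ 1 := h2
  · rintro ⟨h1, h2⟩
    constructor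
    · intro j
      rw [psi_apply]
      have hpos : (0:ℝ) < (cf k (n-1) j.val : ℝ) := by
        exact_mod_cast cf_pos hk hkn j.isLt
      exact mul_pos hpos (h1 j)
    · calc ∑ j : Fin n, psi n k (phi n k y) j
          = ∑ j : Fin n, (cf k (n-1) j.val : ℝ) * phi n k y j := by
            apply Finset.sum_congr rfl
            intro j _
            rw [psi_apply]
        _ = y ⟨n-1, by omega⟩ := hexp.symm
        _ ≤ 1 := h2

lemma vol_regions (hk : 2 ≤ k) (hkn : k ≤ n) :
    volume (regionLow n k) = volume (regionHigh n k) ∧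
    volume (regionHigh n k) =
      ENNReal.ofReal ((∏ i : Fin n, (cf k (n - 1) i.val : ℝ))⁻¹) * volume (simplexSet n) := by
  have hdetphi : LinearMap.det (phi n k) ≠ 0 := by rw [det_phi]; norm_num
  have hprodpos : (0:ℝ) < ∏ i : Fin n, (cf k (n - 1) i.val : ℝ) := by
    apply Finset.prod_pos
    intro i _
    exact_mod_cast cf_pos hk hkn i.isLt
  have hdetpsi : LinearMap.det (psi n k) ≠ 0 := by
    rw [det_psi]; exact hprodpos.ne'
  have habs : |(LinearMap.det (psi n k))⁻¹| = (∏ i : Fin n, (cf k (n - 1) i.val : ℝ))⁻¹ := by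
    rw [det_psi, abs_of_pos (by positivity)]
  have hH : volume (regionHigh n k) =
      ENNReal.ofReal ((∏ i : Fin n, (cf k (n - 1) i.val : ℝ))⁻¹) * volume (simplexSet n) := by
    rw [regionHigh, Measure.addHaar_preimage_linearMap volume hdetphi,
      Measure.addHaar_preimage_linearMap volume hdetpsi, det_phi, habs]
    simp
  have hL : volume (regionLow n k) =
      ENNReal.ofReal ((∏ i : Fin n, (cf k (n - 1) i.val : ℝ))⁻¹) * volume (simplexSetS n) := by
    rw [regionLow, Measure.addHaar_preimage_linearMap volume hdetphi,
      Measure.addHaar_preimage_linearMap volume hdetpsi, det_phi, habs]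
    simp
  refine ⟨?_, hH⟩
  rw [hH, hL, vol_simplexSetS]

/-! ### order / polygon conditions in terms of `phi` -/

lemma strictMono_of_succ {y : Fin n → ℝ}
    (h : ∀ M, ∀ hM : M + 1 < n, y ⟨M, by omega⟩ < y ⟨M + 1, hM⟩) : StrictMono y := by
  rintro ⟨a, ha⟩ ⟨b, hb⟩ hab
  rw [Fin.mk_lt_mk] at hab
  induction b with
  | zero => omega
  | succ b IH =>
    rcases Nat.lt_or_ge a b with h' | h'
    · exact (IH (by omega) (by omega)).trans (h b hb)
    · have hab2 : a = b := by omega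
      subst hab2
      exact h a hb

lemma phi_pos_consequences (hk : 2 ≤ k) {y : Fin n → ℝ}
    (h : ∀ j, 0 < phi n k y j) : (∀ i, 0 < y i) ∧ StrictMono y := by
  have key : ∀ M : ℕ, ∀ hM : M < n, 0 < y ⟨M, hM⟩ ∧
      (∀ h1 : 1 ≤ M, y ⟨M - 1, by omega⟩ < y ⟨M, hM⟩) := by
    intro M
    induction M using Nat.strong_induction_on with
    | _ M IH =>
      intro hM
      have hφ := h ⟨M, hM⟩
      rw [phi_apply] at hφ
      simp only at hφ
      rcases Nat.eq_zero_or_pos M with rfl | hM1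
      · rw [d_zero] at hφ
        rw [show Finset.Icc 1 0 = (∅ : Finset ℕ) by simp, Finset.sum_empty, sub_zero] at hφ
        exact ⟨hφ, fun h1 => by omega⟩
      · have hd1 : 1 ≤ d k M := by
          unfold d
          split <;> omega
        have hdM := d_le k M
        have hterms : ∀ p ∈ Finset.Icc 1 (d k M),
            0 ≤ y ⟨M - p, Nat.lt_of_le_of_lt (Nat.sub_le _ _) hM⟩ := by
          intro p hp
          simp only [Finset.mem_Icc] at hp
          exact (IH (M - p) (by omega) (by omega)).1.le
        have hsum : y ⟨M - 1, by omega⟩ ≤ ∑ p ∈ Finset.Icc 1 (d k M),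
            y ⟨M - p, Nat.lt_of_le_of_lt (Nat.sub_le _ _) hM⟩ := by
          have h1mem : (1:ℕ) ∈ Finset.Icc 1 (d k M) := Finset.mem_Icc.mpr ⟨le_refl _, hd1⟩
          exact Finset.single_le_sum (f := fun p => y ⟨M - p, Nat.lt_of_le_of_lt (Nat.sub_le _ _) hM⟩)
            hterms h1mem
        have hlt : y ⟨M - 1, by omega⟩ < y ⟨M, hM⟩ := by nlinarith
        have hpos : 0 < y ⟨M, hM⟩ :=
          lt_of_le_of_lt (IH (M - 1) (by omega) (by omega)).1.le hlt
        exact ⟨hpos, fun _ => hlt⟩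
  constructor
  · intro i
    have := (key i.val i.isLt).1
    simpa using this
  · apply strictMono_of_succ
    intro M hM
    have := (key (M + 1) hM).2 (by omega)
    simpa using this

lemma phi_window (hk : 2 ≤ k) (y : Fin n → ℝ) (j : Fin n) (hj : k - 1 ≤ j.val) :
    phi n k y j = y j - ∑ jj : Fin (k - 1),
      y ⟨(j.val - (k - 1)) + jj.val, by have := jj.isLt; have := j.isLt; omega⟩ := by
  rw [phi_apply]
  congr 1
  have hd : d k j.val = k - 1 := by unfold d; rw [if_neg (by omega)]
  rw [show Finset.Icc 1 (d k j.val) = Finset.Icc 1 (k-1) by rw [hd]]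
  rw [sum_shift (fun p => y ⟨j.val - p, Nat.lt_of_le_of_lt (Nat.sub_le _ _) j.isLt⟩)]
  have hy : ∀ t, t < k - 1 → (j.val - (k - 1)) + t < n := by
    intro t ht
    have := j.isLt
    omega
  set f : ℕ → ℝ := fun t => if h : (j.val - (k - 1)) + t < n
    then y ⟨(j.val - (k - 1)) + t, h⟩ else 0 with hf
  calc ∑ p ∈ Finset.range (k-1),
        y ⟨j.val - (p + 1), Nat.lt_of_le_of_lt (Nat.sub_le _ _) j.isLt⟩
      = ∑ t ∈ Finset.range (k-1), f (k - 1 - 1 - t) := by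
        apply Finset.sum_congr rfl
        intro t ht
        simp only [Finset.mem_range] at ht
        rw [hf]
        simp only
        rw [dif_pos (hy _ (by omega))]
        congr 1
        exact Fin.mk_eq_mk.mpr (by omega)
    _ = ∑ t ∈ Finset.range (k-1), f t := Finset.sum_range_reflect f (k-1)
    _ = ∑ jj : Fin (k-1), f jj.val := (Fin.sum_univ_eq_sum_range f (k-1)).symm
    _ = ∑ jj : Fin (k - 1),
          y ⟨(j.val - (k - 1)) + jj.val, by have := jj.isLt; have := j.isLt; omega⟩ := by
        apply Finset.sum_congr rfl
        intro jj _
        rw [hf]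
        simp only
        rw [dif_pos (hy _ jj.isLt)]

lemma window_phi (hk : 2 ≤ k) (y : Fin n → ℝ) (i : ℕ) (hi : i + (k - 1) < n) :
    phi n k y ⟨i + (k - 1), hi⟩ = y ⟨i + (k - 1), hi⟩ -
      ∑ jj : Fin (k - 1), y ⟨i + jj.val, by have := jj.isLt; omega⟩ := by
  rw [phi_window n k hk y _ (by simp)]
  congr 1
  apply Finset.sum_congr rfl
  intro jj _
  congr 1
  apply Fin.mk_eq_mk.mpr
  show i + (k - 1) - (k - 1) + jj.val = i + jj.val
  omega

/-- membership in `regionHigh` from sorted-cube plus non-strict window conditions. -/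
lemma mem_regionHigh_of (hk : 2 ≤ k) (hkn : k ≤ n) {y : Fin n → ℝ} (hmono : Monotone y)
    (h0 : 0 ≤ y ⟨0, by omega⟩) (h1 : y ⟨n - 1, by omega⟩ ≤ 1)
    (hwin : ∀ j : Fin n, k - 1 ≤ j.val → 0 ≤ phi n k y j) : y ∈ regionHigh n k := by
  rw [mem_regionHigh n k hk hkn]
  refine ⟨fun j => ?_, h1⟩
  rcases Nat.lt_or_ge j.val (k - 1) with hj | hj
  · rcases Nat.eq_zero_or_pos j.val with hj0 | hj0
    · have hjeq : j = ⟨0, by omega⟩ := Fin.ext hj0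
      rw [phi_apply, hjeq]
      rw [show d k (0:ℕ) = 0 from d_zero k]
      rw [show Finset.Icc 1 0 = (∅ : Finset ℕ) by simp, Finset.sum_empty, sub_zero]
      exact h0
    · have hd : d k j.val = 1 := by unfold d; rw [if_pos hj]; omega
      rw [phi_apply]
      rw [show Finset.Icc 1 (d k j.val) = {1} by rw [hd]; rfl, Finset.sum_singleton]
      have : y ⟨j.val - 1, Nat.lt_of_le_of_lt (Nat.sub_le _ _) j.isLt⟩ ≤ y j := by
        apply hmono
        simp only [Fin.le_def]
        omega
      linarith
  · exact hwin j hj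

/-- membership in `regionLow` yields cube membership and `NoPolygon` for the sorted tuple. -/
lemma regionLow_consequences (hk : 2 ≤ k) (hkn : k ≤ n) {y : Fin n → ℝ}
    (hy : y ∈ regionLow n k) :
    (∀ i, 0 ≤ y i ∧ y i ≤ 1) ∧ NoPolygon n k y ∧ StrictMono y := by
  rw [mem_regionLow n k hk hkn] at hy
  obtain ⟨hpos, hle⟩ := hy
  obtain ⟨hposy, hsm⟩ := phi_pos_consequences n k hk hpos
  refine ⟨fun i => ⟨(hposy i).le, ?_⟩, ?_, hsm⟩
  · calc y i ≤ y ⟨n - 1, by omega⟩ := by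
          apply hsm.monotone
          simp only [Fin.le_def]
          have := i.isLt
          omega
      _ ≤ 1 := hle
  · intro i hi
    have h := hpos ⟨i + (k - 1), hi⟩
    rw [window_phi n k hk y i hi] at h
    exact sub_pos.mp h

/-! ### the `k = 2` case : volume of the simplex -/

lemma T_two {m : ℕ} (hm : 1 ≤ m) : T 2 1 m = 1 := by
  induction m using Nat.strong_induction_on with
  | _ m IH =>
    rcases Nat.lt_or_ge m 2 with h2 | h2
    · rw [T_lt h2, if_pos hm]
    · rw [T_ge (by omega) h2]
      rw [show (2:ℕ) - 1 = 1 from rfl, Finset.sum_range_one]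
      exact IH (m - 1) (by omega) (by omega)

lemma cf_two {n j : ℕ} (hn : 2 ≤ n) (hj : j < n) : cf 2 (n - 1) j = 1 := by
  unfold cf
  rw [show (n - 1) + 1 = n by omega]
  split
  · next hj2 =>
    have hj0 : j = 0 := by omega
    subst hj0
    show T 2 1 n = 1
    exact T_two (by omega)
  · show T 2 1 (n - (j - 0)) = 1
    exact T_two (by omega)

lemma vol_simplexSet (hn : 2 ≤ n) :
    (n.factorial : ℝ≥0∞) * volume (simplexSet n) = 1 := by
  have hk2 : (2:ℕ) ≤ 2 := le_refl 2
  -- the unit cube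
  set Q : Set (Fin n → ℝ) := {x : Fin n → ℝ | ∀ i, x i ∈ Set.Icc (0:ℝ) 1} with hQ
  have hQvol : volume Q = 1 := by
    have : Q = Set.pi Set.univ (fun _ : Fin n => Set.Icc (0:ℝ) 1) := by
      ext x
      simp only [hQ, Set.mem_setOf_eq, Set.mem_pi, Set.mem_univ, forall_true_left,
        Set.mem_Icc, true_implies]
    rw [this, volume_pi_pi]
    simp [Real.volume_Icc]
  -- sandwich the cube between the two regions for k = 2
  have hhigh : ∀ x ∈ Q, x ∘ Tuple.sort x ∈ regionHigh n 2 := by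
    intro x hx
    set y := x ∘ Tuple.sort x with hy
    have hmono : Monotone y := Tuple.monotone_sort x
    apply mem_regionHigh_of n 2 hk2 hn hmono
    · exact (hx (Tuple.sort x ⟨0, by omega⟩)).1
    · exact (hx (Tuple.sort x ⟨n - 1, by omega⟩)).2
    · intro j hj
      have hj1 : 1 ≤ j.val := by simpa using hj
      have hd : d 2 j.val = 1 := by unfold d; split <;> omega
      rw [phi_apply]
      rw [show Finset.Icc 1 (d 2 j.val) = {1} by rw [hd]; rfl, Finset.sum_singleton]
      have : y ⟨j.val - 1, Nat.lt_of_le_of_lt (Nat.sub_le _ _) j.isLt⟩ ≤ y j := by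
        apply hmono
        simp only [Fin.le_def]
        omega
      linarith
  have hlow : ∀ x : Fin n → ℝ, x ∘ Tuple.sort x ∈ regionLow n 2 → x ∈ Q := by
    intro x hx
    obtain ⟨hbd, _, _⟩ := regionLow_consequences n 2 hk2 hn hx
    intro i
    have hxi : x i = (x ∘ Tuple.sort x) ((Tuple.sort x).symm i) := by simp
    rw [hxi]
    exact ⟨(hbd _).1, (hbd _).2⟩
  have hmonoC : ∀ y ∈ regionLow n 2, StrictMono y := fun y hy =>
    (regionLow_consequences n 2 hk2 hn hy).2.2
  have h1 : volume Q ≤ (n.factorial : ℝ≥0∞) * volume (regionHigh n 2) :=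
    sector_le n (meas_regionHigh n 2) hhigh
  have h2 : (n.factorial : ℝ≥0∞) * volume (regionLow n 2) ≤ volume Q :=
    sector_ge n (meas_regionLow n 2) hmonoC hlow
  obtain ⟨heq1, heq2⟩ := vol_regions n 2 hk2 hn
  have hprod1 : (∏ i : Fin n, (cf 2 (n - 1) i.val : ℝ)) = 1 := by
    apply Finset.prod_eq_one
    intro i _
    rw [cf_two hn i.isLt]
    norm_num
  rw [hprod1] at heq2
  simp only [inv_one, ENNReal.ofReal_one, one_mul] at heq2
  rw [heq2] at h1
  rw [heq1, heq2] at h2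
  rw [hQvol] at h1 h2
  exact le_antisymm h2 h1

end PickupSticks

open PickupSticks in
theorem pickup_sticks_no_kgon_prob (n k : ℕ) (hn : 3 ≤ n) (hk : 3 ≤ k) (hkn : k ≤ n) :
    volume {x : Fin n → ℝ | (∀ i, x i ∈ Set.Icc (0 : ℝ) 1) ∧
        NoPolygon n k (x ∘ Tuple.sort x)} =
      1 / ((∏ ℓ ∈ Finset.Icc 1 (k - 1), (T k ℓ n : ℝ≥0∞)) *
           ∏ i ∈ Finset.Icc 1 (n - k + 1), (T k (k - 1) (n - i) : ℝ≥0∞)) := by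
  classical
  have hk2 : 2 ≤ k := by omega
  set A := {x : Fin n → ℝ | (∀ i, x i ∈ Set.Icc (0 : ℝ) 1) ∧
    NoPolygon n k (x ∘ Tuple.sort x)} with hA
  have hAhigh : ∀ x ∈ A, x ∘ Tuple.sort x ∈ regionHigh n k := by
    rintro x ⟨hcube, hpoly⟩
    set y := x ∘ Tuple.sort x with hy
    have hmono : Monotone y := Tuple.monotone_sort x
    apply mem_regionHigh_of n k hk2 hkn hmono
    · exact (hcube (Tuple.sort x ⟨0, by omega⟩)).1
    · exact (hcube (Tuple.sort x ⟨n - 1, by omega⟩)).2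
    · intro j hj
      have hi : (j.val - (k - 1)) + (k - 1) < n := by have := j.isLt; omega
      have hjeq : (⟨(j.val - (k - 1)) + (k - 1), hi⟩ : Fin n) = j := by
        apply Fin.ext
        show (j.val - (k - 1)) + (k - 1) = j.val
        omega
      have h := hpoly (j.val - (k - 1)) hi
      rw [← hjeq, window_phi n k hk2 y _ hi]
      exact sub_nonneg.mpr h.le
  have hAlow : ∀ x : Fin n → ℝ, x ∘ Tuple.sort x ∈ regionLow n k → x ∈ A := by
    intro x hx
    obtain ⟨hbd, hpoly, _⟩ := regionLow_consequences n k hk2 hkn hx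
    constructor
    · intro i
      have hxi : x i = (x ∘ Tuple.sort x) ((Tuple.sort x).symm i) := by simp
      rw [Set.mem_Icc, hxi]
      exact hbd _
    · exact hpoly
  have hmonoC : ∀ y ∈ regionLow n k, StrictMono y := fun y hy =>
    (regionLow_consequences n k hk2 hkn hy).2.2
  have h1 : volume A ≤ (n.factorial : ℝ≥0∞) * volume (regionHigh n k) :=
    sector_le n (meas_regionHigh n k) hAhigh
  have h2 : (n.factorial : ℝ≥0∞) * volume (regionLow n k) ≤ volume A :=
    sector_ge n (meas_regionLow n k) hmonoC hAlow
  obtain ⟨heq1, heq2⟩ := vol_regions n k hk2 hkn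
  have hsimp := vol_simplexSet n (by omega)
  set E := ENNReal.ofReal ((∏ i : Fin n, (cf k (n - 1) i.val : ℝ))⁻¹) with hE
  have hvolA : volume A = E := by
    rw [heq2] at h1
    rw [heq1, heq2] at h2
    have hr : (n.factorial : ℝ≥0∞) * (E * volume (simplexSet n)) = E := by
      rw [← mul_assoc, mul_comm (n.factorial : ℝ≥0∞) E, mul_assoc, hsimp, mul_one]
    rw [hr] at h1 h2
    exact le_antisymm h1 h2
  rw [hvolA]
  -- the product identity in ℕ
  have hP : (∏ i : Fin n, cf k (n - 1) i.val) =
      (∏ ℓ ∈ Finset.Icc 1 (k - 1), T k ℓ n) *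
        ∏ i ∈ Finset.Icc 1 (n - k + 1), T k (k - 1) (n - i) := by
    have hstep1 : (∏ i : Fin n, cf k (n - 1) i.val) =
        ∏ j ∈ Finset.range n, cf k (n - 1) j :=
      Fin.prod_univ_eq_prod_range _ n
    have hsplit : (∏ j ∈ Finset.Ico 0 (k - 1), cf k (n - 1) j) *
        (∏ j ∈ Finset.Ico (k - 1) n, cf k (n - 1) j) =
          ∏ j ∈ Finset.range n, cf k (n - 1) j := by
      rw [Finset.prod_Ico_consecutive _ (Nat.zero_le _) (by omega), Finset.range_eq_Ico]
    have hfirst : (∏ j ∈ Finset.Ico 0 (k - 1), cf k (n - 1) j) =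
        ∏ ℓ ∈ Finset.Icc 1 (k - 1), T k ℓ n := by
      rw [← Finset.range_eq_Ico, prod_shift (fun ℓ => T k ℓ n)]
      apply Finset.prod_congr rfl
      intro j hj
      simp only [Finset.mem_range] at hj
      unfold cf
      rw [if_pos hj, show (n - 1) + 1 = n by omega]
    have hsecond : (∏ j ∈ Finset.Ico (k - 1) n, cf k (n - 1) j) =
        ∏ i ∈ Finset.Icc 1 (n - k + 1), T k (k - 1) (n - i) := by
      rw [Finset.prod_Ico_eq_prod_range, prod_shift (fun i => T k (k - 1) (n - i))]
      apply Finset.prod_congr (by congr 1; omega)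
      intro t _
      unfold cf
      rw [if_neg (by omega)]
      congr 1
      omega
    rw [hstep1, ← hsplit, hfirst, hsecond]
  have hPpos : 0 < ∏ i : Fin n, cf k (n - 1) i.val :=
    Finset.prod_pos fun i _ => cf_pos hk2 hkn i.isLt
  rw [hE]
  rw [show (∏ i : Fin n, (cf k (n - 1) i.val : ℝ)) =
    ((∏ i : Fin n, cf k (n - 1) i.val : ℕ) : ℝ) by push_cast; rfl]
  rw [ENNReal.ofReal_inv_of_pos (by exact_mod_cast hPpos), ENNReal.ofReal_natCast, hP, one_div]
  push_cast
  rfl
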